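/- Let (𝔤, [·,·], K) be a quadratic Lie algebra and let (𝔤*[1] ⊕ 𝔤; 𝔩_1, 𝔩_2) be the strict Lie 2-algebra with 𝔩_1 = (K^♯)^{-1} and 𝔩_2(u+ξ, v+η) = [u,v] + ad*_u η − ad*_v ξ. Define the degree-1 graded symmetric bilinear form 𝒮 on 𝔤*[1] ⊕ 𝔤 by 𝒮(u+ξ, v+η) = ⟨ξ,v⟩ + ⟨η,u⟩. Then 𝒮 is invariant: 𝒮(𝔩_1(ξ), η) = 𝒮(ξ, 𝔩_1(η)) for all ξ, η ∈ 𝔤*, and 𝒮(𝔩_2(u,v), η) = −𝒮(v, 𝔩_2(u,η)) for all u, v ∈ 𝔤 and η ∈ 𝔤*. -/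
import Mathlib

/-- The canonical degree-1 pairing `𝒮(u+ξ, v+η) = ⟨ξ,v⟩ + ⟨η,u⟩` on the strict
Lie 2-algebra `𝔤*[1] ⊕ 𝔤` associated to a quadratic Lie algebra is invariant:
`𝒮(𝔩₁ ξ, η) = 𝒮(ξ, 𝔩₁ η)` and `𝒮(𝔩₂(u,v), η) = −𝒮(v, 𝔩₂(u,η))`. -/
theorem quadratic_strict_lie_2_algebra_pairing_invariant
    (g : Type) [LieRing g] [LieAlgebra ℝ g]
    (K : g →ₗ[ℝ] g →ₗ[ℝ] ℝ)
    (hK_symm : ∀ u v : g, K u v = K v u)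
    (hK_inv : ∀ u v w : g, K ⁅u, v⁆ w = - K v ⁅u, w⁆)
    (Ksharp : g ≃ₗ[ℝ] Module.Dual ℝ g)
    (hKsharp : ∀ u v : g, Ksharp u v = K u v)
    (coad : g → Module.Dual ℝ g → Module.Dual ℝ g)
    (hcoad : ∀ (u w : g) (η : Module.Dual ℝ g), coad u η w = - η ⁅u, w⁆) :
    -- 𝒮(𝔩₁(ξ), η) = 𝒮(ξ, 𝔩₁(η))
    (∀ ξ η : Module.Dual ℝ g, η (Ksharp.symm ξ) = ξ (Ksharp.symm η)) ∧
    -- 𝒮(𝔩₂(u,v), η) = −𝒮(v, 𝔩₂(u,η))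
    (∀ (u v : g) (η : Module.Dual ℝ g), η ⁅u, v⁆ = - (coad u η) v) := by
  constructor
  · intro ξ η
    have h1 : η (Ksharp.symm ξ) = Ksharp (Ksharp.symm η) (Ksharp.symm ξ) := by
      rw [Ksharp.apply_symm_apply]
    have h2 : ξ (Ksharp.symm η) = Ksharp (Ksharp.symm ξ) (Ksharp.symm η) := by
      rw [Ksharp.apply_symm_apply]
    rw [h1, h2, hKsharp, hKsharp, hK_symm]
  · intro u v η
    rw [hcoad, neg_neg]
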